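/- Let p > 1 and q > 0 with q ≠ 1, and define s_{p,q} : (0,∞) → ℝ by s_{p,q}(z) = − log_q( ((p−1) z)^{1/(1−p)} ), where log_q(s) = (s^{1−q} − 1)/(1−q) for s > 0. Then s_{p,q} is non-decreasing on (0,∞), and if moreover q ≥ p, then s_{p,q} is convex on (0,∞). -/
import Mathlib


open MeasureTheory Real Set

noncomputable section

def RapidDecay {d : ℕ} (f : EuclideanSpace ℝ (Fin d) → ℝ) : Prop :=
  ∀ n k : ℕ, ∃ C : ℝ, ∀ x, ‖iteratedFDeriv ℝ n f x‖ * ‖x‖ ^ k ≤ C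

def bv (d : ℕ) (i : Fin d) : EuclideanSpace ℝ (Fin d) := EuclideanSpace.single i 1

def lap {d : ℕ} (f : EuclideanSpace ℝ (Fin d) → ℝ) (x : EuclideanSpace ℝ (Fin d)) : ℝ :=
  ∑ i, fderiv ℝ (fun y => fderiv ℝ f y (bv d i)) x (bv d i)

def hessEntry {d : ℕ} (f : EuclideanSpace ℝ (Fin d) → ℝ) (x : EuclideanSpace ℝ (Fin d))
    (i j : Fin d) : ℝ :=
  fderiv ℝ (fun y => fderiv ℝ f y (bv d j)) x (bv d i)

def hessNormSq {d : ℕ} (f : EuclideanSpace ℝ (Fin d) → ℝ) (x : EuclideanSpace ℝ (Fin d)) : ℝ :=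
  ∑ i, ∑ j, (hessEntry f x i j) ^ 2

def divg {d : ℕ} (V : EuclideanSpace ℝ (Fin d) → EuclideanSpace ℝ (Fin d))
    (x : EuclideanSpace ℝ (Fin d)) : ℝ :=
  ∑ i, fderiv ℝ V x (bv d i) i

def epd (p z : ℝ) : ℝ := p * z ^ (p - 1) / (p - 1)

def entE {d : ℕ} (p : ℝ) (u : EuclideanSpace ℝ (Fin d) → ℝ) : ℝ :=
  (1 / (p - 1)) * ∫ x, u x ^ p

def fisher {d : ℕ} (p : ℝ) (u : EuclideanSpace ℝ (Fin d) → ℝ) : ℝ :=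
  ∫ x, u x * ‖gradient (fun y => epd p (u y)) x‖ ^ 2

def Jp {d : ℕ} (p : ℝ) (u : EuclideanSpace ℝ (Fin d) → ℝ) : ℝ :=
  2 * ∫ x, u x ^ p *
    (hessNormSq (fun y => epd p (u y)) x + (p - 1) * (lap (fun y => epd p (u y)) x) ^ 2)

def renyi {d : ℕ} (p : ℝ) (u : EuclideanSpace ℝ (Fin d) → ℝ) : ℝ :=
  (1 / (1 - p)) * Real.log (∫ x, u x ^ p)

theorem stmt (p q : ℝ) (hp : 1 < p) (hq : 0 < q) (hq1 : q ≠ 1) :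
    MonotoneOn (fun z : ℝ => -(((((p - 1) * z) ^ (1 / (1 - p))) ^ (1 - q) - 1) / (1 - q)))
      (Set.Ioi 0) ∧
    (p ≤ q →
      ConvexOn ℝ (Set.Ioi 0)
        (fun z : ℝ => -(((((p - 1) * z) ^ (1 / (1 - p))) ^ (1 - q) - 1) / (1 - q)))) := by
  have hp1 : (0:ℝ) < p - 1 := by linarith
  have hq1' : (1:ℝ) - q ≠ 0 := by intro h; apply hq1; linarith
  set β : ℝ := 1 / (1 - p) * (1 - q) with hβ
  have heq : ∀ z ∈ Set.Ioi (0:ℝ),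
      (fun z : ℝ => -(((((p - 1) * z) ^ (1 / (1 - p))) ^ (1 - q) - 1) / (1 - q))) z
        = (1 / (q - 1)) * ((p - 1) * z) ^ β - 1 / (q - 1) := by
    intro z hz
    have hz' : (0:ℝ) < z := hz
    have hz0 : (0:ℝ) ≤ (p - 1) * z := by positivity
    simp only
    rw [← Real.rpow_mul hz0, ← hβ]
    have hq2 : q - 1 ≠ 0 := by intro h; apply hq1; linarith
    set X := ((p - 1) * z) ^ β
    field_simp
    ring
  have hβval : β = (q - 1) / (p - 1) := by
    have h1p : (1:ℝ) - p ≠ 0 := by intro h; linarith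
    rw [hβ, div_mul_eq_mul_div, one_mul, div_eq_div_iff h1p (by linarith : p - 1 ≠ 0)]
    ring
  constructor
  · intro x hx y hy hxy
    rw [heq x hx, heq y hy]
    have hx' : (0:ℝ) < x := hx
    have hx0 : (0:ℝ) < (p - 1) * x := mul_pos hp1 hx'
    have hxy' : (p - 1) * x ≤ (p - 1) * y :=
      mul_le_mul_of_nonneg_left hxy hp1.le
    rcases lt_or_gt_of_ne hq1 with h | h
    · have hβneg : β ≤ 0 := by
        rw [hβval]; apply div_nonpos_of_nonpos_of_nonneg <;> linarith
      have h2 := Real.rpow_le_rpow_of_nonpos hx0 hxy' hβneg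
      have hc : 1 / (q - 1) < 0 := by
        apply div_neg_of_pos_of_neg one_pos; linarith
      nlinarith
    · have hβpos : 0 ≤ β := by
        rw [hβval]
        apply div_nonneg <;> linarith
      have h2 := Real.rpow_le_rpow hx0.le hxy' hβpos
      have hc : 0 < 1 / (q - 1) := by
        apply div_pos one_pos; linarith
      nlinarith
  · intro hpq
    have hq1'' : (1:ℝ) < q := lt_of_lt_of_le hp hpq
    have hβ1 : 1 ≤ β := by
      rw [hβval, le_div_iff₀ hp1]; linarith
    have h1 : ConvexOn ℝ (Set.Ici 0) (fun x : ℝ => x ^ β) := convexOn_rpow hβ1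
    have h2 := h1.comp_affineMap ((p - 1) • AffineMap.id ℝ ℝ)
    have h3 : ConvexOn ℝ (Set.Ioi 0) (fun z : ℝ => ((p - 1) * z) ^ β) := by
      refine (h2.subset ?_ (convex_Ioi 0)).congr ?_
      · intro z hz
        have hz' : (0:ℝ) < z := hz
        simp only [Set.mem_preimage, AffineMap.coe_smul, AffineMap.coe_id, Pi.smul_apply,
          smul_eq_mul, id_eq, Set.mem_Ici]
        positivity
      · intro z hz
        simp [smul_eq_mul]
    have hcpos : (0:ℝ) ≤ 1 / (q - 1) := by
      apply div_nonneg zero_le_one; linarith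
    have h4 := (h3.smul hcpos).add_const (-(1 / (q - 1)))
    refine h4.congr fun z hz => ?_
    have e := heq z hz
    simp only [] at e
    rw [e]
    simp [smul_eq_mul, sub_eq_add_neg]
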